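/- For every n ≥ 3, the distinguishing number of the lexicographic product of the spider graph G_n with the complete graph K_2 equals ⌈(1 + √(1 + 8√n))/2⌉, i.e. D(G_n[K_2]) is the least integer r such that (r(r−1)/2)^2 ≥ n. -/

import Mathlib

open SimpleGraph

/-- The lexicographic product of two simple graphs. -/
def lexProd {V W : Type*} (G : SimpleGraph V) (H : SimpleGraph W) :
    SimpleGraph (V × W) where
  Adj p q := G.Adj p.1 q.1 ∨ (p.1 = q.1 ∧ H.Adj p.2 q.2)
  symm := by
    refine ⟨?_⟩
    rintro p q (h | ⟨h1, h2⟩)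
    · exact Or.inl h.symm
    · exact Or.inr ⟨h1.symm, h2.symm⟩
  loopless := by
    refine ⟨?_⟩
    rintro p (h | ⟨_, h⟩)
    · exact G.ne_of_adj h rfl
    · exact H.ne_of_adj h rfl

/-- The distinguishing number: the least `d` such that there is a vertex labeling with `d`
labels preserved only by the identity automorphism. -/
noncomputable def distinguishingNumber {V : Type*} (G : SimpleGraph V) : ℕ :=
  sInf {d : ℕ | ∃ φ : V → Fin d,
    ∀ σ : G ≃g G, (∀ v, φ (σ v) = φ v) → ∀ v, σ v = v}

/-- The distinguishing index: the least `d` such that there is an edge labeling with `d`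
labels preserved only by the identity automorphism. -/
noncomputable def distinguishingIndex {V : Type*} (G : SimpleGraph V) : ℕ :=
  sInf {d : ℕ | ∃ ψ : G.edgeSet → Fin d,
    ∀ σ : G ≃g G, (∀ e, ψ (σ.mapEdgeSet e) = ψ e) → ∀ v, σ v = v}

/-- Every automorphism of `G[H]` is of wreath form, i.e. `Aut(G[H]) = Aut(G)[Aut(H)]`. -/
def wreathForm {V W : Type*} (G : SimpleGraph V) (H : SimpleGraph W) : Prop :=
  ∀ f : lexProd G H ≃g lexProd G H,
    ∃ (α : G ≃g G) (β : V → (H ≃g H)),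
      ∀ p : V × W, f p = (α p.1, β (α p.1) p.2)
/-- The spider graph: the star `K_{1,n}` with every edge subdivided. -/
def spider (n : ℕ) : SimpleGraph (Unit ⊕ Fin n ⊕ Fin n) :=
  SimpleGraph.fromRel (fun a b =>
    (∃ i : Fin n, a = Sum.inl () ∧ b = Sum.inr (Sum.inl i)) ∨
    (∃ i : Fin n, a = Sum.inr (Sum.inl i) ∧ b = Sum.inr (Sum.inr i)))


set_option linter.unreachableTactic false
set_option linter.unusedTactic false
set_option linter.unnecessarySeqFocus false
set_option linter.unusedVariables false

abbrev vc {n : ℕ} : Unit ⊕ Fin n ⊕ Fin n := Sum.inl ()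
abbrev vm {n : ℕ} (i : Fin n) : Unit ⊕ Fin n ⊕ Fin n := Sum.inr (Sum.inl i)
abbrev vl {n : ℕ} (i : Fin n) : Unit ⊕ Fin n ⊕ Fin n := Sum.inr (Sum.inr i)

abbrev GG (n : ℕ) : SimpleGraph ((Unit ⊕ Fin n ⊕ Fin n) × Fin 2) :=
  lexProd (spider n) (⊤ : SimpleGraph (Fin 2))

lemma spider_adj {n : ℕ} (a b : Unit ⊕ Fin n ⊕ Fin n) :
    (spider n).Adj a b ↔ ∃ i : Fin n,
      (a = vc ∧ b = vm i) ∨ (a = vm i ∧ b = vc) ∨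
      (a = vm i ∧ b = vl i) ∨ (a = vl i ∧ b = vm i) := by
  rw [spider, fromRel_adj]
  constructor
  · rintro ⟨hne, (⟨i,rfl,rfl⟩|⟨i,rfl,rfl⟩)|(⟨i,rfl,rfl⟩|⟨i,rfl,rfl⟩)⟩
    · exact ⟨i, Or.inl ⟨rfl, rfl⟩⟩
    · exact ⟨i, Or.inr (Or.inr (Or.inl ⟨rfl, rfl⟩))⟩
    · exact ⟨i, Or.inr (Or.inl ⟨rfl, rfl⟩)⟩
    · exact ⟨i, Or.inr (Or.inr (Or.inr ⟨rfl, rfl⟩))⟩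
  · rintro ⟨i, h⟩
    rcases h with ⟨h1,h2⟩|⟨h1,h2⟩|⟨h1,h2⟩|⟨h1,h2⟩ <;> subst h1 <;> subst h2
    · exact ⟨by simp, Or.inl (Or.inl ⟨i, rfl, rfl⟩)⟩
    · exact ⟨by simp, Or.inr (Or.inl ⟨i, rfl, rfl⟩)⟩
    · exact ⟨by simp, Or.inl (Or.inr ⟨i, rfl, rfl⟩)⟩
    · exact ⟨by simp, Or.inr (Or.inr ⟨i, rfl, rfl⟩)⟩

lemma GG_adj {n : ℕ} (p q : (Unit ⊕ Fin n ⊕ Fin n) × Fin 2) :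
    (GG n).Adj p q ↔ (spider n).Adj p.1 q.1 ∨ (p.1 = q.1 ∧ p.2 ≠ q.2) :=
  Iff.rfl

lemma fin2 : ∀ x : Fin 2, x = 0 ∨ x = 1 := by decide

/-- Fiber flips form automorphisms. -/
def fiberFlip {n : ℕ} (b : (Unit ⊕ Fin n ⊕ Fin n) → Equiv.Perm (Fin 2)) : GG n ≃g GG n where
  toFun w := (w.1, b w.1 w.2)
  invFun w := (w.1, (b w.1).symm w.2)
  left_inv w := by simp
  right_inv w := by simp
  map_rel_iff' := by
    intro p q
    simp only [Equiv.coe_fn_mk, GG_adj]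
    constructor
    · rintro (h | ⟨h1, h2⟩)
      · exact Or.inl h
      · refine Or.inr ⟨h1, fun he => h2 ?_⟩
        rw [he, h1]
    · rintro (h | ⟨h1, h2⟩)
      · exact Or.inl h
      · refine Or.inr ⟨h1, fun he => h2 ?_⟩
        rw [h1] at he
        exact (b q.1).injective he

def Sm {n : ℕ} (π : Equiv.Perm (Fin n)) : Equiv.Perm (Unit ⊕ Fin n ⊕ Fin n) :=
  Equiv.sumCongr (Equiv.refl Unit) (Equiv.sumCongr π π)

@[simp] lemma Sm_c {n : ℕ} (π : Equiv.Perm (Fin n)) : Sm π vc = vc := rfl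
@[simp] lemma Sm_m {n : ℕ} (π : Equiv.Perm (Fin n)) (i : Fin n) : Sm π (vm i) = vm (π i) := rfl
@[simp] lemma Sm_l {n : ℕ} (π : Equiv.Perm (Fin n)) (i : Fin n) : Sm π (vl i) = vl (π i) := rfl

lemma Sm_spider {n : ℕ} (π : Equiv.Perm (Fin n)) (a b : Unit ⊕ Fin n ⊕ Fin n) :
    (spider n).Adj (Sm π a) (Sm π b) ↔ (spider n).Adj a b := by
  rcases a with ⟨⟩ | a | a <;> rcases b with ⟨⟩ | b | b <;>
    simp [spider_adj, Sm, Equiv.sumCongr] <;> constructor <;> rintro h <;>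
    first
      | exact π.injective h
      | exact congrArg π h
      | exact h

def legPerm {n : ℕ} (π : Equiv.Perm (Fin n)) : GG n ≃g GG n where
  toEquiv := (Sm π).prodCongr (Equiv.refl (Fin 2))
  map_rel_iff' := by
    intro p q
    simp only [Equiv.prodCongr_apply, Equiv.coe_refl, Prod.map, GG_adj, id]
    rw [Sm_spider]
    constructor
    · rintro (h | ⟨h1, h2⟩)
      · exact Or.inl h
      · exact Or.inr ⟨(Sm π).injective h1, h2⟩
    · rintro (h | ⟨h1, h2⟩)
      · exact Or.inl h
      · exact Or.inr ⟨congrArg _ h1, h2⟩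

/-- "neighborhood is a clique" predicate -/
def Pnb {n : ℕ} (w : (Unit ⊕ Fin n ⊕ Fin n) × Fin 2) : Prop :=
  ∀ u v, (GG n).Adj w u → (GG n).Adj w v → u ≠ v → (GG n).Adj u v

lemma Pnb_map {n : ℕ} (σ : GG n ≃g GG n) (w) (h : Pnb w) : Pnb (σ w) := by
  intro u v hu hv huv
  have hu' : (GG n).Adj w (σ.symm u) := by
    rw [← σ.map_rel_iff, σ.apply_symm_apply]; exact hu
  have hv' : (GG n).Adj w (σ.symm v) := by
    rw [← σ.map_rel_iff, σ.apply_symm_apply]; exact hv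
  have hne : σ.symm u ≠ σ.symm v := fun he => huv (by
    rw [← σ.apply_symm_apply u, ← σ.apply_symm_apply v, he])
  have := h _ _ hu' hv' hne
  rw [← σ.apply_symm_apply u, ← σ.apply_symm_apply v, σ.map_rel_iff]
  exact this

lemma Pnb_iff {n : ℕ} (σ : GG n ≃g GG n) (w) : Pnb (σ w) ↔ Pnb w := by
  refine ⟨fun h => ?_, Pnb_map σ w⟩
  have := Pnb_map σ.symm _ h
  rwa [σ.symm_apply_apply] at this

lemma fin2_eq_of_ne : ∀ x y z : Fin 2, y ≠ x → z ≠ x → y = z := by decide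

lemma Pnb_iff_leaf {n : ℕ} (hn : 2 ≤ n) (w : (Unit ⊕ Fin n ⊕ Fin n) × Fin 2) :
    Pnb w ↔ ∃ (i : Fin n) (x : Fin 2), w = (vl i, x) := by
  obtain ⟨p, x⟩ := w
  rcases p with ⟨⟩ | i | i
  · simp only [Prod.mk.injEq]
    constructor
    · intro h
      exfalso
      have h01 : (⟨0, by omega⟩ : Fin n) ≠ ⟨1, by omega⟩ := by simp
      have := h (vm ⟨0, by omega⟩, 0) (vm ⟨1, by omega⟩, 0)
        (by rw [GG_adj]; left; simp [spider_adj])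
        (by rw [GG_adj]; left; simp [spider_adj])
        (by simp [h01])
      rw [GG_adj] at this
      rcases this with h' | ⟨h', -⟩
      · simp [spider_adj] at h'
      · simp at h'
    · rintro ⟨i, y, h, -⟩ <;> simp at h
  · simp only [Prod.mk.injEq]
    constructor
    · intro h
      exfalso
      have := h (vc, 0) (vl i, 0)
        (by rw [GG_adj]; left; simp [spider_adj])
        (by rw [GG_adj]; left; simp [spider_adj])
        (by simp)
      rw [GG_adj] at this
      rcases this with h' | ⟨h', -⟩
      · simp [spider_adj] at h'
      · simp at h'
    · rintro ⟨j, y, h, -⟩; simp at h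
  · constructor
    · intro _; exact ⟨i, x, rfl⟩
    · rintro -
      intro u v hu hv huv
      rw [GG_adj] at hu hv ⊢
      have hu' : u.1 = vm i ∨ (u.1 = vl i ∧ u.2 ≠ x) := by
        rcases hu with h' | ⟨h', h2⟩
        · rw [spider_adj] at h'
          rcases h' with ⟨j, ⟨h1,h2⟩|⟨h1,h2⟩|⟨h1,h2⟩|⟨h1,h2⟩⟩ <;> simp_all
        · exact Or.inr ⟨h'.symm, fun he => h2 he.symm⟩
      have hv' : v.1 = vm i ∨ (v.1 = vl i ∧ v.2 ≠ x) := by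
        rcases hv with h' | ⟨h', h2⟩
        · rw [spider_adj] at h'
          rcases h' with ⟨j, ⟨h1,h2⟩|⟨h1,h2⟩|⟨h1,h2⟩|⟨h1,h2⟩⟩ <;> simp_all
        · exact Or.inr ⟨h'.symm, fun he => h2 he.symm⟩
      rcases hu' with h1 | ⟨h1, hx1⟩ <;> rcases hv' with h2 | ⟨h2, hx2⟩
      · refine Or.inr ⟨h1.trans h2.symm, fun he => huv ?_⟩
        exact Prod.ext (h1.trans h2.symm) he
      · left; rw [h1, h2]; simp [spider_adj]
      · left; rw [h1, h2]; simp [spider_adj]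
      · exact absurd (Prod.ext (h1.trans h2.symm) (fin2_eq_of_ne x u.2 v.2 hx1 hx2)) huv

/-- center predicate -/
def Qc {n : ℕ} (w : (Unit ⊕ Fin n ⊕ Fin n) × Fin 2) : Prop :=
  ¬ Pnb w ∧ ∀ u, (GG n).Adj w u → ¬ Pnb u

lemma Qc_iff' {n : ℕ} (σ : GG n ≃g GG n) (w) : Qc (σ w) ↔ Qc w := by
  have key : ∀ (τ : GG n ≃g GG n) (w), Qc w → Qc (τ w) := by
    intro τ w ⟨h1, h2⟩
    refine ⟨fun h => h1 ((Pnb_iff τ w).mp h), ?_⟩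
    intro u hu hp
    have hu' : (GG n).Adj w (τ.symm u) := by
      rw [← τ.map_rel_iff, τ.apply_symm_apply]; exact hu
    refine h2 _ hu' ?_
    have := (Pnb_iff τ (τ.symm u))
    rw [τ.apply_symm_apply] at this
    exact this.mp hp
  refine ⟨fun h => ?_, key σ w⟩
  have := key σ.symm _ h
  rwa [σ.symm_apply_apply] at this

lemma Qc_iff_center {n : ℕ} (hn : 2 ≤ n) (w : (Unit ⊕ Fin n ⊕ Fin n) × Fin 2) :
    Qc w ↔ ∃ x, w = (vc, x) := by
  obtain ⟨p, x⟩ := w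
  rcases p with ⟨⟩ | i | i
  · simp only [Prod.mk.injEq]
    constructor
    · intro _; exact ⟨x, by simp⟩
    · rintro -
      constructor
      · rw [Pnb_iff_leaf hn]
        rintro ⟨i, y, h, -⟩ <;> simp at h
      · intro u hu
        rw [Pnb_iff_leaf hn]
        rintro ⟨i, y, rfl⟩
        rw [GG_adj] at hu
        rcases hu with h' | ⟨h', -⟩
        · simp [spider_adj] at h'
        · simp at h'
  · constructor
    · rintro ⟨-, h2⟩
      exfalso
      refine h2 (vl i, 0) (by rw [GG_adj]; left; simp [spider_adj]) ?_
      rw [Pnb_iff_leaf hn]; exact ⟨i, 0, rfl⟩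
    · rintro ⟨y, h⟩; simp at h
  · constructor
    · rintro ⟨h1, -⟩
      exact absurd ((Pnb_iff_leaf hn _).mpr ⟨i, x, rfl⟩) h1
    · rintro ⟨y, h⟩; simp at h

lemma sigma_c {n : ℕ} (hn : 2 ≤ n) (σ : GG n ≃g GG n) (x : Fin 2) :
    ∃ y, σ (vc, x) = (vc, y) := by
  have : Qc (σ (vc, x)) := (Qc_iff' σ _).mpr ((Qc_iff_center hn _).mpr ⟨x, rfl⟩)
  exact (Qc_iff_center hn _).mp this

lemma sigma_l {n : ℕ} (hn : 2 ≤ n) (σ : GG n ≃g GG n) (i : Fin n) (x : Fin 2) :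
    ∃ j y, σ (vl i, x) = (vl j, y) := by
  have : Pnb (σ (vl i, x)) := (Pnb_iff σ _).mpr ((Pnb_iff_leaf hn _).mpr ⟨i, x, rfl⟩)
  exact (Pnb_iff_leaf hn _).mp this

lemma sigma_m {n : ℕ} (hn : 2 ≤ n) (σ : GG n ≃g GG n) (i : Fin n) (x : Fin 2) :
    ∃ j y, σ (vm i, x) = (vm j, y) := by
  have hnp : ¬ Pnb (σ (vm i, x)) := by
    rw [Pnb_iff, Pnb_iff_leaf hn]
    rintro ⟨j, y, h, -⟩ <;> simp at h
  have hnq : ¬ Qc (σ (vm i, x)) := by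
    rw [Qc_iff', Qc_iff_center hn]
    rintro ⟨y, h, -⟩ <;> simp at h
  rcases hw : σ (vm i, x) with ⟨p, y⟩
  rw [hw] at hnp hnq
  rcases p with ⟨⟩ | j | j
  · exact absurd ((Qc_iff_center hn _).mpr ⟨y, rfl⟩) hnq
  · exact ⟨j, y, rfl⟩
  · exact absurd ((Pnb_iff_leaf hn _).mpr ⟨j, y, rfl⟩) hnp

lemma sym2_mk_inf_sup {α : Type*} [LinearOrder α] (z : Sym2 α) : s(z.inf, z.sup) = z := by
  induction z using Sym2.ind with
  | _ a b =>
    rcases le_total a b with h | h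
    · rw [Sym2.inf_mk, Sym2.sup_mk, inf_eq_left.2 h, sup_eq_right.2 h]
    · rw [Sym2.inf_mk, Sym2.sup_mk, inf_eq_right.2 h, sup_eq_left.2 h, Sym2.eq_swap]

lemma sym2_inf_ne_sup {α : Type*} [LinearOrder α] {z : Sym2 α} (h : ¬ z.IsDiag) :
    z.inf ≠ z.sup := by
  intro he
  apply h
  rw [← sym2_mk_inf_sup z]
  exact Sym2.mk_isDiag_iff.mpr he

lemma upper_bound {n : ℕ} (hn : 3 ≤ n) (r : ℕ) (hr : n ≤ (r * (r - 1) / 2) ^ 2) :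
    ∃ φ : (Unit ⊕ Fin n ⊕ Fin n) × Fin 2 → Fin r,
      ∀ σ : GG n ≃g GG n, (∀ v, φ (σ v) = φ v) → ∀ v, σ v = v := by
  have hn2 : 2 ≤ n := by omega
  have hr3 : 2 ≤ r := by
    by_contra h
    push_neg at h
    interval_cases r <;> simp at hr <;> omega
  have hcard : Fintype.card (Fin n) ≤
      Fintype.card ({z : Sym2 (Fin r) // ¬ z.IsDiag} × {z : Sym2 (Fin r) // ¬ z.IsDiag}) := by
    rw [Fintype.card_fin, Fintype.card_prod, Sym2.card_subtype_not_diag, Fintype.card_fin,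
      Nat.choose_two_right, ← sq]
    exact hr
  obtain ⟨u⟩ := Function.Embedding.nonempty_of_card_le hcard
  classical
  let φ : (Unit ⊕ Fin n ⊕ Fin n) × Fin 2 → Fin r := fun w =>
    match w with
    | (Sum.inl _, x) => Fin.castLE hr3 x
    | (Sum.inr (Sum.inl i), x) =>
        if x = 0 then ((u i).1 : Sym2 (Fin r)).inf else ((u i).1 : Sym2 (Fin r)).sup
    | (Sum.inr (Sum.inr i), x) =>
        if x = 0 then ((u i).2 : Sym2 (Fin r)).inf else ((u i).2 : Sym2 (Fin r)).sup
  have φc : ∀ x, φ (vc, x) = Fin.castLE hr3 x := fun _ => rfl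
  have φm0 : ∀ i, φ (vm i, 0) = ((u i).1 : Sym2 (Fin r)).inf := fun _ => by simp [φ]
  have φm1 : ∀ i, φ (vm i, 1) = ((u i).1 : Sym2 (Fin r)).sup := fun _ => by simp [φ]
  have φl0 : ∀ i, φ (vl i, 0) = ((u i).2 : Sym2 (Fin r)).inf := fun _ => by simp [φ]
  have φl1 : ∀ i, φ (vl i, 1) = ((u i).2 : Sym2 (Fin r)).sup := fun _ => by simp [φ]
  refine ⟨φ, ?_⟩
  intro σ hφ
  -- the center is fixed
  have hcx : ∀ x, σ (vc, x) = (vc, x) := by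
    intro x
    obtain ⟨y, hy⟩ := sigma_c hn2 σ x
    have e : φ (vc, y) = φ (vc, x) := by rw [← hy]; exact hφ _
    rw [φc, φc] at e
    have : y = x := by simpa using e
    rw [hy, this]
  -- each leg is fixed
  have key : ∀ i : Fin n, σ (vm i, 0) = (vm i, 0) ∧ σ (vm i, 1) = (vm i, 1) ∧
      σ (vl i, 0) = (vl i, 0) ∧ σ (vl i, 1) = (vl i, 1) := by
    intro i
    obtain ⟨j0, y0, h0⟩ := sigma_m hn2 σ i 0
    obtain ⟨j1, y1, h1⟩ := sigma_m hn2 σ i 1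
    have hadj : (GG n).Adj (σ (vm i, 0)) (σ (vm i, 1)) :=
      σ.map_rel_iff.mpr ((GG_adj _ _).mpr (Or.inr ⟨rfl, by simp⟩))
    rw [h0, h1, GG_adj] at hadj
    rcases hadj with h' | ⟨h', hy⟩
    · exfalso; simp [spider_adj] at h'
    · have hj : j0 = j1 := by simpa using h'
      rw [← hj] at h1
      -- leaves go to leg j0
      obtain ⟨k0, z0, hl0⟩ := sigma_l hn2 σ i 0
      obtain ⟨k1, z1, hl1⟩ := sigma_l hn2 σ i 1
      have hadj0 : (GG n).Adj (σ (vm i, 0)) (σ (vl i, 0)) :=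
        σ.map_rel_iff.mpr ((GG_adj _ _).mpr (Or.inl (by simp [spider_adj])))
      rw [h0, hl0, GG_adj] at hadj0
      have hk0 : k0 = j0 := by
        rcases hadj0 with h'' | ⟨h'', -⟩
        · rw [spider_adj] at h''
          rcases h'' with ⟨a, h''⟩
          rcases h'' with ⟨e1,e2⟩|⟨e1,e2⟩|⟨e1,e2⟩|⟨e1,e2⟩ <;> simp_all
        · simp at h''
      have hadj1 : (GG n).Adj (σ (vm i, 0)) (σ (vl i, 1)) :=
        σ.map_rel_iff.mpr ((GG_adj _ _).mpr (Or.inl (by simp [spider_adj])))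
      rw [h0, hl1, GG_adj] at hadj1
      have hk1 : k1 = j0 := by
        rcases hadj1 with h'' | ⟨h'', -⟩
        · rw [spider_adj] at h''
          rcases h'' with ⟨a, h''⟩
          rcases h'' with ⟨e1,e2⟩|⟨e1,e2⟩|⟨e1,e2⟩|⟨e1,e2⟩ <;> simp_all
        · simp at h''
      rw [hk0] at hl0
      rw [hk1] at hl1
      have hz : z0 ≠ z1 := by
        intro he
        have : σ (vl i, 0) = σ (vl i, 1) := by rw [hl0, hl1, he]
        have := σ.toEquiv.injective this
        simp at this
      -- labels transported
      have e0 : φ (vm j0, y0) = φ (vm i, 0) := by rw [← h0]; exact hφ _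
      have e1 : φ (vm j0, y1) = φ (vm i, 1) := by rw [← h1]; exact hφ _
      have f0 : φ (vl j0, z0) = φ (vl i, 0) := by rw [← hl0]; exact hφ _
      have f1 : φ (vl j0, z1) = φ (vl i, 1) := by rw [← hl1]; exact hφ _
      -- first components of u agree
      have hu1 : (u j0).1 = (u i).1 := by
        apply Subtype.ext
        rcases fin2 y0 with rfl | rfl
        · rcases fin2 y1 with rfl | rfl
          · exact absurd rfl hy
          · rw [φm0, φm0] at e0
            rw [φm1, φm1] at e1
            rw [← sym2_mk_inf_sup ((u j0).1 : Sym2 (Fin r)),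
              ← sym2_mk_inf_sup ((u i).1 : Sym2 (Fin r)), e0, e1]
        · rcases fin2 y1 with rfl | rfl
          · rw [φm1, φm0] at e0
            rw [φm0, φm1] at e1
            rw [← sym2_mk_inf_sup ((u j0).1 : Sym2 (Fin r)),
              ← sym2_mk_inf_sup ((u i).1 : Sym2 (Fin r)), e0, e1, Sym2.eq_swap]
          · exact absurd rfl hy
      have hu2 : (u j0).2 = (u i).2 := by
        apply Subtype.ext
        rcases fin2 z0 with rfl | rfl
        · rcases fin2 z1 with rfl | rfl
          · exact absurd rfl hz
          · rw [φl0, φl0] at f0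
            rw [φl1, φl1] at f1
            rw [← sym2_mk_inf_sup ((u j0).2 : Sym2 (Fin r)),
              ← sym2_mk_inf_sup ((u i).2 : Sym2 (Fin r)), f0, f1]
        · rcases fin2 z1 with rfl | rfl
          · rw [φl1, φl0] at f0
            rw [φl0, φl1] at f1
            rw [← sym2_mk_inf_sup ((u j0).2 : Sym2 (Fin r)),
              ← sym2_mk_inf_sup ((u i).2 : Sym2 (Fin r)), f0, f1, Sym2.eq_swap]
          · exact absurd rfl hz
      have hji : j0 = i := u.injective (Prod.ext hu1 hu2)
      subst hji
      have hy0 : y0 = 0 := by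
        rcases fin2 y0 with rfl | rfl
        · rfl
        · rw [φm1, φm0] at e0
          exact absurd e0.symm (sym2_inf_ne_sup (u j0).1.2)
      have hy1 : y1 = 1 := by
        rcases fin2 y1 with rfl | rfl
        · rw [φm0, φm1] at e1
          exact absurd e1 (sym2_inf_ne_sup (u j0).1.2)
        · rfl
      have hz0 : z0 = 0 := by
        rcases fin2 z0 with rfl | rfl
        · rfl
        · rw [φl1, φl0] at f0
          exact absurd f0.symm (sym2_inf_ne_sup (u j0).2.2)
      have hz1 : z1 = 1 := by
        rcases fin2 z1 with rfl | rfl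
        · rw [φl0, φl1] at f1
          exact absurd f1 (sym2_inf_ne_sup (u j0).2.2)
        · rfl
      subst hy0; subst hy1; subst hz0; subst hz1
      exact ⟨h0, h1, hl0, hl1⟩
  intro v
  obtain ⟨p, x⟩ := v
  rcases p with ⟨⟩ | i | i
  · exact hcx x
  · rcases fin2 x with rfl | rfl
    · exact (key i).1
    · exact (key i).2.1
  · rcases fin2 x with rfl | rfl
    · exact (key i).2.2.1
    · exact (key i).2.2.2

lemma sym2_perm {d : ℕ} {a b : Fin 2 → Fin d} (hne : a 0 ≠ a 1)
    (hS : s(a 0, a 1) = s(b 0, b 1)) :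
    ∃ f : Equiv.Perm (Fin 2), ∀ x, b (f x) = a x ∧ a (f x) = b x := by
  rw [Sym2.eq_iff] at hS
  rcases hS with ⟨h1, h2⟩ | ⟨h1, h2⟩
  · refine ⟨1, fun x => ?_⟩
    rcases fin2 x with rfl | rfl
    · exact ⟨by simp [← h1], by simp [h1]⟩
    · exact ⟨by simp [← h2], by simp [h2]⟩
  · refine ⟨Equiv.swap 0 1, fun x => ?_⟩
    rcases fin2 x with rfl | rfl
    · rw [Equiv.swap_apply_left]
      exact ⟨h1.symm, h2⟩
    · rw [Equiv.swap_apply_right]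
      exact ⟨h2.symm, h1⟩

lemma lower_bound {n : ℕ} (hn : 3 ≤ n) (d : ℕ)
    (φ : (Unit ⊕ Fin n ⊕ Fin n) × Fin 2 → Fin d)
    (hdist : ∀ σ : GG n ≃g GG n, (∀ v, φ (σ v) = φ v) → ∀ v, σ v = v) :
    n ≤ (d * (d - 1) / 2) ^ 2 := by
  classical
  by_contra hlt
  push_neg at hlt
  by_cases hA : ∃ p : Unit ⊕ Fin n ⊕ Fin n, φ (p, 0) = φ (p, 1)
  · obtain ⟨p, hp⟩ := hA
    set σ := fiberFlip (n := n) (fun q => if q = p then Equiv.swap 0 1 else 1) with hσ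
    have hpres : ∀ v, φ (σ v) = φ v := by
      rintro ⟨q, x⟩
      by_cases hq : q = p
      · subst hq
        have : σ (q, x) = (q, Equiv.swap 0 1 x) := by simp [hσ, fiberFlip]
        rw [this]
        rcases fin2 x with rfl | rfl
        · rw [Equiv.swap_apply_left]; exact hp.symm
        · rw [Equiv.swap_apply_right]; exact hp
      · have : σ (q, x) = (q, x) := by simp [hσ, fiberFlip, hq]
        rw [this]
    have hfix := hdist σ hpres (p, 0)
    have : σ (p, 0) = (p, 1) := by simp [hσ, fiberFlip]
    rw [hfix] at this
    simp at this
  · push_neg at hA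
    let t : Fin n → {z : Sym2 (Fin d) // ¬ z.IsDiag} × {z : Sym2 (Fin d) // ¬ z.IsDiag} := fun i =>
      (⟨s(φ (vm i, 0), φ (vm i, 1)), by rw [Sym2.mk_isDiag_iff]; exact hA (vm i)⟩,
       ⟨s(φ (vl i, 0), φ (vl i, 1)), by rw [Sym2.mk_isDiag_iff]; exact hA (vl i)⟩)
    have hcard : Fintype.card
        ({z : Sym2 (Fin d) // ¬ z.IsDiag} × {z : Sym2 (Fin d) // ¬ z.IsDiag}) <
        Fintype.card (Fin n) := by
      rw [Fintype.card_prod, Sym2.card_subtype_not_diag, Fintype.card_fin, Fintype.card_fin,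
        Nat.choose_two_right, ← sq]
      exact hlt
    obtain ⟨i, j, hij, hte⟩ := Fintype.exists_ne_map_eq_of_card_lt t hcard
    have hm : s(φ (vm i, 0), φ (vm i, 1)) = s(φ (vm j, 0), φ (vm j, 1)) :=
      congrArg (fun w => (w.1 : Sym2 (Fin d))) hte
    have hl : s(φ (vl i, 0), φ (vl i, 1)) = s(φ (vl j, 0), φ (vl j, 1)) :=
      congrArg (fun w => (w.2 : Sym2 (Fin d))) hte
    obtain ⟨fm, hfm⟩ := sym2_perm (a := fun x => φ (vm i, x)) (b := fun x => φ (vm j, x))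
      (hA (vm i)) hm
    obtain ⟨fl, hfl⟩ := sym2_perm (a := fun x => φ (vl i, x)) (b := fun x => φ (vl j, x))
      (hA (vl i)) hl
    let b : (Unit ⊕ Fin n ⊕ Fin n) → Equiv.Perm (Fin 2) := fun q =>
      if q = vm i ∨ q = vm j then fm else if q = vl i ∨ q = vl j then fl else 1
    set σ : GG n ≃g GG n := (legPerm (Equiv.swap i j)).trans (fiberFlip b) with hσ
    have hσap : ∀ p x, σ (p, x) = (Sm (Equiv.swap i j) p, b (Sm (Equiv.swap i j) p) x) :=
      fun p x => rfl
    have hpres : ∀ v, φ (σ v) = φ v := by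
      rintro ⟨p, x⟩
      rw [hσap]
      rcases p with ⟨⟩ | k | k
      · rw [Sm_c]
        have hb : b (vc : Unit ⊕ Fin n ⊕ Fin n) = 1 := by simp [b]
        rw [hb]
        simp
      · rw [Sm_m]
        by_cases hk : k = i
        · subst hk
          rw [Equiv.swap_apply_left]
          have hb : b (vm j) = fm := by simp [b]
          rw [hb]
          exact (hfm x).1
        · by_cases hk' : k = j
          · subst hk'
            rw [Equiv.swap_apply_right]
            have hb : b (vm i) = fm := by simp [b]
            rw [hb]
            exact (hfm x).2
          · rw [Equiv.swap_apply_of_ne_of_ne hk hk']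
            have hb : b (vm k) = 1 := by simp [b, hk, hk']
            rw [hb]
            simp
      · rw [Sm_l]
        by_cases hk : k = i
        · subst hk
          rw [Equiv.swap_apply_left]
          have hb : b (vl j) = fl := by simp [b, hij]
          rw [hb]
          exact (hfl x).1
        · by_cases hk' : k = j
          · subst hk'
            rw [Equiv.swap_apply_right]
            have hb : b (vl i) = fl := by simp [b]
            rw [hb]
            exact (hfl x).2
          · rw [Equiv.swap_apply_of_ne_of_ne hk hk']
            have hb : b (vl k) = 1 := by simp [b, hk, hk']
            rw [hb]
            simp
    have hfix := hdist σ hpres (vm i, 0)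
    rw [hσap, Sm_m, Equiv.swap_apply_left] at hfix
    have : j = i := by
      have := congrArg Prod.fst hfix
      simpa using this
    exact hij this.symm

theorem stmt4 (n : ℕ) (hn : 3 ≤ n) :
    distinguishingNumber (lexProd (spider n) (⊤ : SimpleGraph (Fin 2))) =
      sInf {r : ℕ | n ≤ (r * (r - 1) / 2) ^ 2} := by
  unfold distinguishingNumber
  congr 1
  ext d
  simp only [Set.mem_setOf_eq]
  constructor
  · rintro ⟨φ, hφ⟩
    exact lower_bound hn d φ hφ
  · intro hd
    exact upper_bound hn d hd
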